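/- For the root system of type A_n with Weyl group W = S_{n+1} acting on the weight lattice P, the number of orbits of W on P/2P equals n/2 + 1 if n is even, and (n+1)/2 + 1 if n is odd. Representatives are given by 0, ϖ_1, ..., ϖ_{⌊(n+1)/2⌋}. -/

import Mathlib

/-- The weight lattice of A_n modulo 2 is F₂^{n+1} modulo the all-ones vector;
two classes are in the same W = S_{n+1} orbit iff related by a permutation up
to adding the all-ones vector. -/
def AnRel (n : ℕ) (x y : Fin (n + 1) → ZMod 2) : Prop :=
  ∃ σ : Equiv.Perm (Fin (n + 1)), x ∘ σ = y ∨ x ∘ σ = y + (fun _ => 1)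

/-- The image of the fundamental weight ϖ_i in P/2P (with ϖ_0 = 0):
the vector with i ones. -/
def fundClass (n : ℕ) (i : ℕ) : Fin (n + 1) → ZMod 2 :=
  fun j => if (j : ℕ) < i then 1 else 0

/-- Number of ones of a vector. -/
def onesCt (n : ℕ) (x : Fin (n + 1) → ZMod 2) : ℕ := Fintype.card {j // x j = 1}

lemma zmod2_cases (a : ZMod 2) : a = 0 ∨ a = 1 := by fin_cases a <;> [exact Or.inl rfl; exact Or.inr rfl]

lemma onesCt_comp (n : ℕ) (x : Fin (n + 1) → ZMod 2) (σ : Equiv.Perm (Fin (n + 1))) :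
    onesCt n (x ∘ σ) = onesCt n x :=
  Fintype.card_congr (σ.subtypeEquiv fun _ => Iff.rfl)

lemma onesCt_le (n : ℕ) (x : Fin (n + 1) → ZMod 2) : onesCt n x ≤ n + 1 := by
  simpa [onesCt] using Fintype.card_subtype_le (fun j => x j = 1)

lemma onesCt_add_one (n : ℕ) (x : Fin (n + 1) → ZMod 2) :
    onesCt n (x + fun _ => 1) = n + 1 - onesCt n x := by
  have : onesCt n (x + fun _ => 1) = Fintype.card {j // ¬ x j = 1} := by
    refine Fintype.card_congr (Equiv.subtypeEquivRight fun j => ?_)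
    show x j + 1 = 1 ↔ ¬ x j = 1
    rcases zmod2_cases (x j) with h | h <;> simp [h]
  rw [this, Fintype.card_subtype_compl, Fintype.card_fin, onesCt]

lemma onesCt_fundClass (n i : ℕ) (h : i ≤ n + 1) : onesCt n (fundClass n i) = i := by
  have e1 : onesCt n (fundClass n i) = Fintype.card {j : Fin (n + 1) // (j : ℕ) < i} := by
    refine Fintype.card_congr (Equiv.subtypeEquivRight fun j => ?_)
    show fundClass n i j = 1 ↔ (j : ℕ) < i
    unfold fundClass
    split <;> simp_all
  rw [e1]
  have e2 : {j : Fin (n + 1) // (j : ℕ) < i} ≃ Fin i :=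
    { toFun := fun j => ⟨j.1.1, j.2⟩
      invFun := fun k => ⟨⟨k.1, lt_of_lt_of_le k.2 h⟩, k.2⟩
      left_inv := fun j => by ext; rfl
      right_inv := fun k => rfl }
  rw [Fintype.card_congr e2, Fintype.card_fin]

lemma exists_perm_of_onesCt_eq {n : ℕ} {x y : Fin (n + 1) → ZMod 2}
    (h : onesCt n x = onesCt n y) : ∃ σ : Equiv.Perm (Fin (n + 1)), x ∘ σ = y := by
  have e : {j // y j = 1} ≃ {j // x j = 1} := Fintype.equivOfCardEq h.symm
  have hc : Fintype.card {j // ¬ y j = 1} = Fintype.card {j // ¬ x j = 1} := by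
    rw [Fintype.card_subtype_compl, Fintype.card_subtype_compl]
    exact congrArg _ h.symm
  have f : {j // ¬ y j = 1} ≃ {j // ¬ x j = 1} := Fintype.equivOfCardEq hc
  refine ⟨Equiv.subtypeCongr e f, funext fun j => ?_⟩
  show x (Equiv.subtypeCongr e f j) = y j
  by_cases hy : y j = 1
  · have : Equiv.subtypeCongr e f j = (e ⟨j, hy⟩ : Fin (n + 1)) := by
      unfold Equiv.subtypeCongr
      rw [Equiv.trans_apply, Equiv.trans_apply,
        Equiv.sumCompl_symm_apply_of_pos (p := fun k => y k = 1) hy]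
      rfl
    rw [this, hy]
    exact (e ⟨j, hy⟩).2
  · have : Equiv.subtypeCongr e f j = (f ⟨j, hy⟩ : Fin (n + 1)) := by
      unfold Equiv.subtypeCongr
      rw [Equiv.trans_apply, Equiv.trans_apply,
        Equiv.sumCompl_symm_apply_of_neg (p := fun k => y k = 1) hy]
      rfl
    rw [this]
    have h1 := (f ⟨j, hy⟩).2
    rcases zmod2_cases (x ((f ⟨j, hy⟩ : Fin (n + 1)))) with h2 | h2
    · rcases zmod2_cases (y j) with h3 | h3
      · rw [h2, h3]
      · exact absurd h3 hy
    · exact absurd h2 h1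

lemma anRel_equivalence (n : ℕ) : Equivalence (AnRel n) := by
  constructor
  · intro x
    exact ⟨1, Or.inl (by ext j; rfl)⟩
  · rintro x y ⟨σ, h | h⟩
    · refine ⟨σ⁻¹, Or.inl (funext fun j => ?_)⟩
      have := congrFun h (σ⁻¹ j)
      simpa using this.symm
    · refine ⟨σ⁻¹, Or.inr (funext fun j => ?_)⟩
      have := congrFun h (σ⁻¹ j)
      simp only [Function.comp_apply, ← Equiv.Perm.mul_apply, mul_inv_cancel, Equiv.Perm.one_apply] at this
      have h2 : x j = y (σ⁻¹ j) + 1 := this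
      show y (σ⁻¹ j) = x j + 1
      rw [h2]
      rcases zmod2_cases (y (σ⁻¹ j)) with h3 | h3 <;> rw [h3] <;> decide
  · rintro x y z ⟨σ, h1 | h1⟩ ⟨τ, h2 | h2⟩
    · refine ⟨σ * τ, Or.inl (funext fun j => ?_)⟩
      have a1 := congrFun h1 (τ j); have a2 := congrFun h2 j
      simpa using a1.trans a2
    · refine ⟨σ * τ, Or.inr (funext fun j => ?_)⟩
      have a1 := congrFun h1 (τ j); have a2 := congrFun h2 j
      simpa using a1.trans a2
    · refine ⟨σ * τ, Or.inr (funext fun j => ?_)⟩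
      have a1 := congrFun h1 (τ j); have a2 := congrFun h2 j
      simp only [Function.comp_apply, Pi.add_apply] at a1 a2 ⊢
      show x (σ (τ j)) = z j + 1
      rw [a1, a2]
    · refine ⟨σ * τ, Or.inl (funext fun j => ?_)⟩
      have a1 := congrFun h1 (τ j); have a2 := congrFun h2 j
      simp only [Function.comp_apply, Pi.add_apply] at a1 a2 ⊢
      show x (σ (τ j)) = z j
      rw [a1, a2]
      rcases zmod2_cases (z j) with h3 | h3 <;> rw [h3] <;> decide

lemma quot_mk_eq_iff (n : ℕ) (a b : Fin (n + 1) → ZMod 2) :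
    Quot.mk (AnRel n) a = Quot.mk (AnRel n) b ↔ AnRel n a b := by
  rw [Quot.eq]
  exact (anRel_equivalence n).eqvGen_iff

lemma the_bijective (n : ℕ) :
    Function.Bijective
      (fun i : Fin ((n + 1) / 2 + 1) => Quot.mk (AnRel n) (fundClass n i)) := by
  constructor
  · intro i j hij
    rw [quot_mk_eq_iff] at hij
    obtain ⟨σ, h | h⟩ := hij
    · have := onesCt_comp n (fundClass n i) σ
      rw [h] at this
      rw [onesCt_fundClass n i (by omega), onesCt_fundClass n j (by omega)] at this
      have hi := i.2; have hj := j.2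
      exact Fin.ext (by omega)
    · have := onesCt_comp n (fundClass n i) σ
      rw [h, onesCt_add_one] at this
      rw [onesCt_fundClass n i (by omega), onesCt_fundClass n j (by omega)] at this
      have hi := i.2; have hj := j.2
      exact Fin.ext (by omega)
  · intro q
    obtain ⟨x, rfl⟩ := Quot.exists_rep q
    by_cases hk : onesCt n x ≤ (n + 1) / 2
    · refine ⟨⟨onesCt n x, by omega⟩, ?_⟩
      rw [quot_mk_eq_iff]
      obtain ⟨σ, hσ⟩ := exists_perm_of_onesCt_eq
        (x := fundClass n (onesCt n x)) (y := x)
        (by rw [onesCt_fundClass n _ (onesCt_le n x)])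
      exact ⟨σ, Or.inl hσ⟩
    · have hle := onesCt_le n x
      refine ⟨⟨n + 1 - onesCt n x, by omega⟩, ?_⟩
      rw [quot_mk_eq_iff]
      obtain ⟨σ, hσ⟩ := exists_perm_of_onesCt_eq
        (x := fundClass n (n + 1 - onesCt n x)) (y := x + fun _ => 1)
        (by rw [onesCt_fundClass n _ (by omega), onesCt_add_one])
      exact ⟨σ, Or.inr hσ⟩

/-- for type A_n, the number of W-orbits on P/2P is n/2 + 1 if n
is even and (n+1)/2 + 1 if n is odd, with representatives 0, ϖ_1, ..., ϖ_{⌊(n+1)/2⌋}. -/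
theorem An_orbits_on_P_mod_2P (n : ℕ) :
    Nat.card (Quot (AnRel n)) = (if Even n then n / 2 + 1 else (n + 1) / 2 + 1) ∧
    Function.Bijective
      (fun i : Fin ((n + 1) / 2 + 1) => Quot.mk (AnRel n) (fundClass n i)) := by
  have hb := the_bijective n
  refine ⟨?_, hb⟩
  have := Nat.card_eq_of_bijective _ hb
  rw [Nat.card_eq_fintype_card, Fintype.card_fin] at this
  rw [← this]
  rcases Nat.even_or_odd n with h | h
  · rw [if_pos h]
    rw [Nat.even_iff] at h
    omega
  · rw [if_neg (Nat.not_even_iff_odd.mpr h)]
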